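/- Let V be a vector space over a field and W a subspace of V. Every element of L̄(V,W) is semi-balanced (as a function on the underlying set of V) if and only if V is finite-dimensional. -/

import Mathlib

open Function Submodule


/-- `T` is a transversal of the equivalence relation `ker f = {(x,y) : f x = f y}`:
it contains exactly one element of each `ker f`-class. -/
def IsTransversal {X : Type*} (f : X → X) (T : Set X) : Prop :=
  ∀ x : X, ∃! t, t ∈ T ∧ f t = f x

/-- `f` is semi-balanced if its collapse `c(f) = |X \ T|` (for a transversal `T` of `ker f`)
equals its defect `d(f) = |X \ f(X)|`. -/
def SemiBalanced {X : Type*} (f : X → X) : Prop :=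
  ∃ T : Set X, IsTransversal f T ∧ Cardinal.mk ↥(Tᶜ) = Cardinal.mk ↥((Set.range f)ᶜ)


/-- An infinite-dimensional space has an injective, non-surjective endomorphism. -/
lemma aux_exists {K M : Type*} [Field K] [AddCommGroup M] [Module K M]
    (hM : ¬ FiniteDimensional K M) :
    ∃ h : M →ₗ[K] M, Injective h ∧ ∃ m : M, m ∉ Set.range h := by
  classical
  set b := Module.Basis.ofVectorSpace K M with hb
  set ι := ↑(Module.Basis.ofVectorSpaceIndex K M) with hι
  have hinf : Infinite ι := by
    rw [← not_finite_iff_infinite]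
    intro hfin
    exact hM (Module.Finite.of_basis b)
  have hcard : Cardinal.mk (Option ι) = Cardinal.mk ι := by
    rw [Cardinal.mk_option, Cardinal.add_one_eq (Cardinal.infinite_iff.mp hinf)]
  obtain ⟨E⟩ := Cardinal.eq.mp hcard
  set σ : ι → ι := fun i => E (some i) with hσ
  have hσinj : Injective σ := fun a b hab => by
    simpa using E.injective hab
  have hi₀ : (E none) ∉ Set.range σ := by
    rintro ⟨j, hj⟩
    exact (Option.some_ne_none j) (E.injective hj)
  set h : M →ₗ[K] M :=
    (b.repr.symm.toLinearMap) ∘ₗ (Finsupp.lmapDomain K K σ) ∘ₗ (b.repr.toLinearMap) with hh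
  refine ⟨h, ?_, b (E none), ?_⟩
  · intro x y hxy
    simp only [hh, LinearMap.comp_apply, LinearEquiv.coe_coe, Finsupp.lmapDomain_apply] at hxy
    have := Finsupp.mapDomain_injective hσinj (b.repr.symm.injective hxy)
    exact b.repr.injective this
  · rintro ⟨x, hx⟩
    have hx' : b.repr (h x) = Finsupp.mapDomain σ (b.repr x) := by
      rw [hh]
      simp only [LinearMap.comp_apply, LinearEquiv.coe_coe, Finsupp.lmapDomain_apply,
        LinearEquiv.apply_symm_apply]
    have hrepr : Finsupp.mapDomain σ (b.repr x) = Finsupp.single (E none) 1 := by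
      rw [← hx', hx, Module.Basis.repr_self]
    have hmem : E none ∈ (Finsupp.mapDomain σ (b.repr x)).support := by
      rw [hrepr]
      simp [Finsupp.support_single_ne_zero _ (one_ne_zero)]
    have := Finsupp.mapDomain_support hmem
    obtain ⟨j, _, hj⟩ := Finset.mem_image.mp this
    exact hi₀ ⟨j, hj⟩

/-- Extend an injective non-surjective endomorphism of `M` by the identity on a complement. -/
lemma aux_assemble {K V : Type*} [Field K] [AddCommGroup V] [Module K V]
    {M N : Submodule K V} (hMN : IsCompl M N) (h : ↥M →ₗ[K] ↥M)
    (hinj : Injective h) (m : ↥M) (hm : m ∉ Set.range h) :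
    ∃ f : V →ₗ[K] V, (∀ x ∈ M, f x ∈ M) ∧ (∀ x ∈ N, f x = x) ∧
      Injective f ∧ ¬ Surjective f := by
  classical
  set e := Submodule.prodEquivOfIsCompl M N hMN with he
  have he_apply : ∀ p : ↥M × ↥N, e p = (p.1 : V) + (p.2 : V) := by
    intro p
    simp [he, Submodule.coe_prodEquivOfIsCompl]
  set f : V →ₗ[K] V :=
    e.toLinearMap ∘ₗ ((h.prodMap (LinearMap.id : ↥N →ₗ[K] ↥N))) ∘ₗ e.symm.toLinearMap with hf
  have hf_apply : ∀ x : V, f x = ((h (e.symm x).1 : V) + ((e.symm x).2 : V)) := by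
    intro x
    simp [hf, he_apply]
  have hsymmM : ∀ (x : V) (hx : x ∈ M), e.symm x = (⟨x, hx⟩, 0) := by
    intro x hx
    apply e.injective
    rw [e.apply_symm_apply, he_apply]
    simp
  have hsymmN : ∀ (x : V) (hx : x ∈ N), e.symm x = (0, ⟨x, hx⟩) := by
    intro x hx
    apply e.injective
    rw [e.apply_symm_apply, he_apply]
    simp
  refine ⟨f, ?_, ?_, ?_, ?_⟩
  · intro x hx
    rw [hf_apply, hsymmM x hx]
    simpa using (h ⟨x, hx⟩).2
  · intro x hx
    rw [hf_apply, hsymmN x hx]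
    simp
  · intro x y hxy
    rw [hf_apply, hf_apply] at hxy
    have h1 : ((h (e.symm x).1 : V), ((e.symm x).2 : V)) = ((h (e.symm y).1 : V), ((e.symm y).2 : V)) := by
      have hx1 : (h (e.symm x).1 : V) ∈ M := (h (e.symm x).1).2
      have hy1 : (h (e.symm y).1 : V) ∈ M := (h (e.symm y).1).2
      have hx2 : ((e.symm x).2 : V) ∈ N := (e.symm x).2.2
      have hy2 : ((e.symm y).2 : V) ∈ N := (e.symm y).2.2
      have hdiff : (h (e.symm x).1 : V) - (h (e.symm y).1 : V) = ((e.symm y).2 : V) - ((e.symm x).2 : V) := by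
        rw [sub_eq_sub_iff_add_eq_add, hxy, add_comm]
      have hmem1 : (h (e.symm x).1 : V) - (h (e.symm y).1 : V) ∈ M ⊓ N := by
        constructor
        · exact sub_mem hx1 hy1
        · rw [hdiff]; exact sub_mem hy2 hx2
      rw [hMN.inf_eq_bot, Submodule.mem_bot, sub_eq_zero] at hmem1
      have : ((e.symm y).2 : V) - ((e.symm x).2 : V) = 0 := by rw [← hdiff, hmem1, sub_self]
      rw [sub_eq_zero] at this
      exact Prod.ext hmem1 this.symm
    have h2 : h (e.symm x).1 = h (e.symm y).1 := Subtype.ext (congrArg Prod.fst h1)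
    have h3 : (e.symm x).2 = (e.symm y).2 := Subtype.ext (congrArg Prod.snd h1)
    have h4 : (e.symm x).1 = (e.symm y).1 := hinj h2
    have : e.symm x = e.symm y := Prod.ext h4 h3
    exact e.symm.injective this
  · intro hsurj
    obtain ⟨x, hx⟩ := hsurj (m : V)
    apply hm
    refine ⟨(e.symm x).1, ?_⟩
    have := hf_apply x
    rw [hx] at this
    have hp2mem : ((e.symm x).2 : V) ∈ M ⊓ N := by
      constructor
      · have : ((e.symm x).2 : V) = (m : V) - (h (e.symm x).1 : V) := by
          rw [this]; abel
        rw [this]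
        exact sub_mem m.2 (h (e.symm x).1).2
      · exact (e.symm x).2.2
    rw [hMN.inf_eq_bot, Submodule.mem_bot] at hp2mem
    apply Subtype.ext
    rw [this, hp2mem, add_zero]

lemma aux_notSB {X : Type*} {f : X → X} (hinj : Injective f) (hnsurj : ¬ Surjective f) :
    ¬ SemiBalanced f := by
  rintro ⟨T, hT, hcard⟩
  have hTuniv : T = Set.univ := by
    ext x
    simp only [Set.mem_univ, iff_true]
    obtain ⟨t, ⟨htT, hft⟩, -⟩ := hT x
    rwa [hinj hft] at htT
  rw [hTuniv, Set.compl_univ, Cardinal.mk_emptyCollection] at hcard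
  have : IsEmpty ↥((Set.range f)ᶜ) := Cardinal.mk_eq_zero_iff.mp hcard.symm
  apply hnsurj
  intro y
  by_contra hy
  exact this.false ⟨y, hy⟩

lemma aux_fin {K V : Type*} [Field K] [AddCommGroup V] [Module K V] [FiniteDimensional K V]
    (f : V →ₗ[K] V) : SemiBalanced (f : V → V) := by
  classical
  obtain ⟨C, hC⟩ := Submodule.exists_isCompl (LinearMap.ker f)
  obtain ⟨D, hD⟩ := Submodule.exists_isCompl (LinearMap.range f)
  set eC := Submodule.prodEquivOfIsCompl _ _ hC with heC
  have heC_apply : ∀ p : ↥(LinearMap.ker f) × ↥C, eC p = (p.1 : V) + (p.2 : V) := by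
    intro p; simp [heC, Submodule.coe_prodEquivOfIsCompl]
  set eD := Submodule.prodEquivOfIsCompl D (LinearMap.range f) hD.symm with heD
  have heD_apply : ∀ p : ↥D × ↥(LinearMap.range f), eD p = (p.1 : V) + (p.2 : V) := by
    intro p; simp [heD, Submodule.coe_prodEquivOfIsCompl]
  set e : ↥C ≃ₗ[K] ↥(LinearMap.range f) :=
    ((Submodule.quotientEquivOfIsCompl _ _ hC).symm.trans f.quotKerEquivRange) with he
  have hrk : Module.finrank K ↥(LinearMap.ker f) = Module.finrank K ↥D := by
    have h1 := Submodule.finrank_add_eq_of_isCompl hC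
    have h2 := Submodule.finrank_add_eq_of_isCompl hD
    have h3 := e.finrank_eq
    omega
  set eK : ↥(LinearMap.ker f) ≃ₗ[K] ↥D := LinearEquiv.ofFinrankEq _ _ hrk with heK
  set g : V ≃ₗ[K] V := eC.symm.trans ((eK.prodCongr e).trans eD) with hg
  have hg_apply : ∀ x : V, g x = ((eK (eC.symm x).1 : V) + (e (eC.symm x).2 : V)) := by
    intro x
    rw [hg]
    simp only [LinearEquiv.trans_apply, LinearEquiv.prodCongr_apply]
    rw [heD_apply]
  have hx_decomp : ∀ x : V, x = ((eC.symm x).1 : V) + ((eC.symm x).2 : V) := by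
    intro x
    conv_lhs => rw [← eC.apply_symm_apply x]
    rw [heC_apply]
  -- key claim
  have hkey : ∀ x : V, g x ∈ LinearMap.range f ↔ x ∈ C := by
    intro x
    constructor
    · intro hgx
      have h1 : (eK (eC.symm x).1 : V) ∈ D ⊓ LinearMap.range f := by
        constructor
        · exact (eK (eC.symm x).1).2
        · have : (eK (eC.symm x).1 : V) = g x - (e (eC.symm x).2 : V) := by
            rw [hg_apply]; abel
          rw [this]
          exact sub_mem hgx (e (eC.symm x).2).2
      rw [hD.symm.inf_eq_bot, Submodule.mem_bot] at h1
      have h2 : eK (eC.symm x).1 = 0 := Subtype.ext h1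
      have h3 : (eC.symm x).1 = 0 := by
        apply eK.injective; rw [h2, map_zero]
      have := hx_decomp x
      rw [h3] at this
      simp only [ZeroMemClass.coe_zero, zero_add] at this
      rw [this]
      exact (eC.symm x).2.2
    · intro hx
      have hsymm : eC.symm x = (0, ⟨x, hx⟩) := by
        apply eC.injective
        rw [eC.apply_symm_apply, heC_apply]
        simp
      rw [hg_apply, hsymm]
      simpa using (e ⟨x, hx⟩).2
  -- transversal
  refine ⟨(C : Set V), ?_, ?_⟩
  · intro x
    refine ⟨((eC.symm x).2 : V), ⟨(eC.symm x).2.2, ?_⟩, ?_⟩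
    · have hk : f ((eC.symm x).1 : V) = 0 := (eC.symm x).1.2
      conv_rhs => rw [hx_decomp x]
      rw [map_add, hk, zero_add]
    · rintro t ⟨htC, hft⟩
      have hk : f ((eC.symm x).1 : V) = 0 := (eC.symm x).1.2
      have hfx : f (((eC.symm x).2 : V)) = f x := by
        conv_rhs => rw [hx_decomp x]
        rw [map_add, hk, zero_add]
      have hdiff : t - ((eC.symm x).2 : V) ∈ LinearMap.ker f ⊓ C := by
        rw [Submodule.mem_inf]
        constructor
        · rw [LinearMap.mem_ker, map_sub, hft, hfx, sub_self]
        · exact sub_mem htC (eC.symm x).2.2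
      rw [hC.inf_eq_bot, Submodule.mem_bot, sub_eq_zero] at hdiff
      exact hdiff
  · have hrange : Set.range (f : V → V) = (LinearMap.range f : Set V) := by
      rw [LinearMap.coe_range]
    rw [hrange]
    refine Cardinal.mk_congr (g.toEquiv.subtypeEquiv ?_)
    intro x
    simp only [Set.mem_compl_iff, SetLike.mem_coe, LinearEquiv.coe_toEquiv]
    rw [hkey x]

theorem stmt19 {K V : Type*} [Field K] [AddCommGroup V] [Module K V]
    (W : Submodule K V) :
    (∀ f : V →ₗ[K] V, (∀ w ∈ W, f w ∈ W) → SemiBalanced (f : V → V)) ↔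
      FiniteDimensional K V := by
  constructor
  · intro hall
    by_contra hV
    obtain ⟨U, hWU⟩ := Submodule.exists_isCompl W
    have hone : ¬ FiniteDimensional K ↥W ∨ ¬ FiniteDimensional K ↥U := by
      by_contra hc
      push_neg at hc
      obtain ⟨h1, h2⟩ := hc
      haveI := h1; haveI := h2
      exact hV (Module.Finite.equiv (Submodule.prodEquivOfIsCompl W U hWU))
    rcases hone with hW | hU
    · obtain ⟨h, hinj, m, hm⟩ := aux_exists hW
      obtain ⟨f, hfM, -, hfinj, hfnsurj⟩ := aux_assemble hWU h hinj m hm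
      exact aux_notSB hfinj hfnsurj (hall f hfM)
    · obtain ⟨h, hinj, m, hm⟩ := aux_exists hU
      obtain ⟨f, -, hfN, hfinj, hfnsurj⟩ := aux_assemble hWU.symm h hinj m hm
      refine aux_notSB hfinj hfnsurj (hall f ?_)
      intro w hw
      rw [hfN w hw]
      exact hw
  · intro hfd f _
    exact aux_fin f
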